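/- Let M ⊆ S¹ be a symmetric Cantorval. Then the set M \ int(M) has no isolated points: for every z ∈ M \ int(M) there exists a sequence (xₙ) in M \ int(M) with xₙ ≠ z for all n and xₙ → z. -/

import Mathlib

open Set Topology Filter

/-- The circle. -/
abbrev S1 := AddCircle (1 : ℝ)

private lemma s1_dist_coe_le (a b : ℝ) : dist (a : S1) (b : S1) ≤ |a - b| := by
  rw [dist_eq_norm, ← AddCircle.coe_sub]
  simpa using QuotientAddGroup.norm_mk_le_norm (S := AddSubgroup.zmultiples (1:ℝ)) (m := a - b)

private lemma s1_continuous_coe : Continuous ((↑) : ℝ → S1) := continuous_quotient_mk'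

private lemma s1_isOpenMap_coe : IsOpenMap ((↑) : ℝ → S1) := QuotientAddGroup.isOpenMap_coe

private lemma s1_coe_int (n : ℤ) : ((n : ℝ) : S1) = 0 := by
  rw [QuotientAddGroup.eq_zero_iff]
  exact ⟨n, by simp⟩

private lemma s1_exists_rep (z y : S1) :
    ∃ r s : ℝ, (r : S1) = z ∧ (s : S1) = y ∧ |s - r| = dist y z := by
  obtain ⟨r, rfl⟩ := QuotientAddGroup.mk_surjective z
  obtain ⟨u, hu⟩ := QuotientAddGroup.mk_surjective (y - (r : S1))
  have h1 : ((u - round u : ℝ) : S1) = (u : S1) := by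
    rw [AddCircle.coe_sub, s1_coe_int, sub_zero]
  refine ⟨r, r + (u - round u), rfl, ?_, ?_⟩
  · rw [AddCircle.coe_add, h1, hu]; abel
  · have h2 : ‖(u : S1)‖ = |u - round u| := by
      have := AddCircle.norm_eq (p := (1:ℝ)) (x := u)
      simpa using this
    rw [add_sub_cancel_left, ← h2, hu, dist_eq_norm]

private lemma abs_sub_le_of_mem_uIcc {r s t : ℝ} (ht : t ∈ uIcc r s) : |t - r| ≤ |s - r| := by
  rcases le_total r s with h | h
  · rw [uIcc_of_le h] at ht
    rw [abs_of_nonneg (by linarith [ht.1]), abs_of_nonneg (by linarith)]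
    linarith [ht.2]
  · rw [uIcc_of_ge h] at ht
    rw [abs_of_nonpos (by linarith [ht.2]), abs_of_nonpos (by linarith)]
    linarith [ht.1]

private lemma s1_exists_ne_close (y : S1) {δ : ℝ} (hδ : 0 < δ) :
    ∃ w : S1, w ≠ y ∧ dist w y < δ := by
  obtain ⟨q, rfl⟩ := QuotientAddGroup.mk_surjective y
  set t := min δ 1 / 2 with htdef
  have ht0 : 0 < t := by positivity
  have ht1 : t ≤ 1 / 2 := by
    rw [htdef]; gcongr; exact min_le_right _ _
  have htδ : t < δ := by
    have : t ≤ δ / 2 := by rw [htdef]; gcongr; exact min_le_left _ _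
    linarith
  refine ⟨((q + t : ℝ) : S1), ?_, ?_⟩
  · intro h
    have h0 : ((t : ℝ) : S1) = 0 := by
      have : ((q + t : ℝ) : S1) - ((q : ℝ) : S1) = 0 := by rw [h]; abel
      rwa [← AddCircle.coe_sub, add_sub_cancel_left] at this
    have h1 : ‖((t : ℝ) : S1)‖ = |t| := by
      rw [AddCircle.norm_coe_eq_abs_iff (1:ℝ) one_ne_zero]
      rw [abs_of_pos ht0, abs_one]; linarith
    rw [h0, norm_zero, abs_of_pos ht0] at h1
    exact absurd h1.symm (ne_of_gt ht0)
  · calc dist ((q + t : ℝ) : S1) ((q : ℝ) : S1) ≤ |q + t - q| := s1_dist_coe_le _ _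
      _ = t := by rw [add_sub_cancel_left, abs_of_pos ht0]
      _ < δ := htδ

/-- A preconnected set meeting `t` and its complement meets the frontier of `t`. -/
private lemma preconn_inter_frontier {X : Type*} [TopologicalSpace X] {s t : Set X}
    (hs : IsPreconnected s) (h1 : (s ∩ t).Nonempty) (h2 : (s \ t).Nonempty) :
    (s ∩ frontier t).Nonempty := by
  by_contra h
  rw [not_nonempty_iff_eq_empty] at h
  have hdis : ∀ x ∈ s, x ∉ frontier t := fun x hx hf =>
    (eq_empty_iff_forall_notMem.mp h x) ⟨hx, hf⟩
  have key := hs (interior t) (closure t)ᶜ isOpen_interior isClosed_closure.isOpen_compl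
    (fun x hx => by
      by_cases hxc : x ∈ closure t
      · left
        by_contra hxi
        exact hdis x hx ⟨hxc, hxi⟩
      · right; exact hxc)
    (by
      obtain ⟨a, has, hat⟩ := h1
      refine ⟨a, has, ?_⟩
      by_contra hai
      exact hdis a has ⟨subset_closure hat, hai⟩)
    (by
      obtain ⟨b, hbs, hbt⟩ := h2
      refine ⟨b, hbs, fun hbc => ?_⟩
      have hbi : b ∉ interior t := fun hbi => hbt (interior_subset hbi)
      exact hdis b hbs ⟨hbc, hbi⟩)
  obtain ⟨x, _, hxi, hxc⟩ := key
  exact hxc (subset_closure (interior_subset hxi))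

private lemma comp_isClosed {X : Type*} [TopologicalSpace X] {M : Set X} (hM : IsClosed M)
    (y : X) : IsClosed (connectedComponentIn M y) := by
  rcases eq_empty_or_nonempty (connectedComponentIn M y) with h | h
  · simp [h]
  · have hy : y ∈ M := connectedComponentIn_nonempty_iff.mp h
    exact isClosed_of_closure_subset
      ((isPreconnected_connectedComponentIn.closure).subset_connectedComponentIn
        (subset_closure (mem_connectedComponentIn hy))
        (closure_minimal (connectedComponentIn_subset M y) hM))

private lemma comp_mem_nhds {M : Set S1} {y : S1} (hy : y ∈ interior M) :
    connectedComponentIn M y ∈ 𝓝 y := by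
  have hMn : M ∈ 𝓝 y := mem_interior_iff_mem_nhds.mp hy
  obtain ⟨δ, hδ, hball⟩ := Metric.mem_nhds_iff.mp hMn
  obtain ⟨q, rfl⟩ := QuotientAddGroup.mk_surjective y
  set V := ((↑) : ℝ → S1) '' Ioo (q - δ/2) (q + δ/2) with hVdef
  have hVsub : V ⊆ M := by
    rintro _ ⟨t, ht, rfl⟩
    apply hball
    rw [Metric.mem_ball]
    calc dist ((t : ℝ) : S1) ((q : ℝ) : S1) ≤ |t - q| := s1_dist_coe_le _ _
      _ < δ := by rw [abs_lt]; constructor <;> [linarith [ht.1]; linarith [ht.2]]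
  have hVopen : IsOpen V := s1_isOpenMap_coe _ isOpen_Ioo
  have hyV : ((q : ℝ) : S1) ∈ V := ⟨q, by constructor <;> linarith, rfl⟩
  have hVpre : IsPreconnected V := isPreconnected_Ioo.image _ s1_continuous_coe.continuousOn
  exact mem_of_superset (hVopen.mem_nhds hyV)
    (hVpre.subset_connectedComponentIn hyV hVsub)

/-- Apply a word `l = [i₁, …, i_k]` of generators: `f i₁ ∘ ⋯ ∘ f i_k`. -/
def applyWord {X : Type*} {n : ℕ} (f : Fin n → X → X) (l : List (Fin n)) (x : X) : X :=
  l.foldr (fun i y => f i y) x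

/-- The orbit of `x` under the semigroup `IFS(f₁,…,fₙ)` (nonempty words). -/
def orbitIFS {X : Type*} {n : ℕ} (f : Fin n → X → X) (x : X) : Set X :=
  {y | ∃ l : List (Fin n), l ≠ [] ∧ y = applyWord f l x}

/-- `M` is a minimal set for the IFS generated by `f₁,…,fₙ`. -/
def IsMinimalIFS {X : Type*} [TopologicalSpace X] {n : ℕ} (f : Fin n → X → X)
    (M : Set X) : Prop :=
  M.Nonempty ∧ IsClosed M ∧ (∀ i, f i '' M ⊆ M) ∧
    ∀ x ∈ M, closure (orbitIFS f x) = M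

/-- A Cantor set: nonempty, compact, perfect and totally disconnected. -/
def IsCantorSet {X : Type*} [TopologicalSpace X] (K : Set X) : Prop :=
  K.Nonempty ∧ IsCompact K ∧ Perfect K ∧ IsTotallyDisconnected K

/-- `X` is (homeomorphic to) the circle or a (nondegenerate) closed interval. -/
def IsCircleOrInterval (X : Type*) [TopologicalSpace X] : Prop :=
  Nonempty (X ≃ₜ S1) ∨ ∃ a b : ℝ, a < b ∧ Nonempty (X ≃ₜ Set.Icc a b)

/-- The canonical decomposition `M = 𝓘 ∪ K ∪ N` of a closed set:
`𝓘` is the interior (union of components of the interior), `K` is the maximal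
Cantor set contained in `M \ 𝓘` (possibly empty), and `N` is the countable remainder. -/
def IsCanonicalDecomp {X : Type*} [TopologicalSpace X] (M I K N : Set X) : Prop :=
  I = interior M ∧
  (IsCantorSet K ∨ K = ∅) ∧
  K ⊆ M \ I ∧
  (∀ K₁ : Set X, IsCantorSet K₁ → K ⊆ K₁ → K₁ ⊆ M \ I → K₁ = K) ∧
  N = M \ (I ∪ K) ∧
  N.Countable

/-- A symmetric Cantorval: a nonempty compact set which is the closure of its interior,
and such that both endpoints of every nontrivial connected component are accumulation
points of one-point connected components. -/
def IsSymmetricCantorval {X : Type*} [TopologicalSpace X] (M : Set X) : Prop :=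
  M.Nonempty ∧ IsCompact M ∧ M = closure (interior M) ∧
  ∀ x ∈ M, ¬ (connectedComponentIn M x).Subsingleton →
    ∀ z ∈ frontier (connectedComponentIn M x),
      AccPt z (𝓟 {y | y ∈ M ∧ connectedComponentIn M y = {y}})

private lemma key_lemma (M : Set S1) (hM : IsSymmetricCantorval M) {z : S1}
    (hz : z ∈ M \ interior M) {ε : ℝ} (hε : 0 < ε) :
    ∃ p, p ∈ M \ interior M ∧ p ≠ z ∧ dist p z < ε := by
  obtain ⟨hne, hcomp, hclM, hsym⟩ := hM
  have hMcl : IsClosed M := hcomp.isClosed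
  have hzM : z ∈ M := hz.1
  by_cases hC : (connectedComponentIn M z).Subsingleton
  · -- z's component is a singleton
    have hzc : z ∈ closure (interior M) := hclM ▸ hzM
    obtain ⟨y, hyint, hyd⟩ := Metric.mem_closure_iff.mp hzc ε hε
    have hyz : y ≠ z := fun h => hz.2 (h ▸ hyint)
    have hyM : y ∈ M := interior_subset hyint
    set Cy := connectedComponentIn M y with hCydef
    have hyCy : y ∈ Cy := mem_connectedComponentIn hyM
    have hzCy : z ∉ Cy := by
      intro h
      have h2 : Cy = connectedComponentIn M z := connectedComponentIn_eq h
      exact hyz (hC (h2 ▸ hyCy) (mem_connectedComponentIn hzM))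
    obtain ⟨r, s, hr, hs, hd⟩ := s1_exists_rep z y
    have hApre : IsPreconnected (((↑) : ℝ → S1) '' uIcc r s) :=
      isPreconnected_uIcc.image _ s1_continuous_coe.continuousOn
    have hyA : y ∈ ((↑) : ℝ → S1) '' uIcc r s := ⟨s, right_mem_uIcc, hs⟩
    have hzA : z ∈ ((↑) : ℝ → S1) '' uIcc r s := ⟨r, left_mem_uIcc, hr⟩
    obtain ⟨p, hpA, hpf⟩ := preconn_inter_frontier hApre ⟨y, hyA, hyCy⟩ ⟨z, hzA, hzCy⟩
    have hCycl : IsClosed Cy := comp_isClosed hMcl y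
    have hpCy : p ∈ Cy := hCycl.closure_eq ▸ frontier_subset_closure hpf
    have hpM : p ∈ M := connectedComponentIn_subset M y hpCy
    have hpint : p ∉ interior M := by
      intro hpin
      have h2 : connectedComponentIn M p = Cy := (connectedComponentIn_eq hpCy).symm
      have h3 := comp_mem_nhds hpin
      rw [h2] at h3
      exact hpf.2 (mem_interior_iff_mem_nhds.mpr h3)
    have hpz : p ≠ z := fun h => hzCy (h ▸ hpCy)
    refine ⟨p, ⟨hpM, hpint⟩, hpz, ?_⟩
    obtain ⟨t, htm, rfl⟩ := hpA
    calc dist ((t : ℝ) : S1) z = dist ((t : ℝ) : S1) ((r : ℝ) : S1) := by rw [hr]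
      _ ≤ |t - r| := s1_dist_coe_le t r
      _ ≤ |s - r| := abs_sub_le_of_mem_uIcc htm
      _ = dist y z := hd
      _ = dist z y := dist_comm _ _
      _ < ε := hyd
  · -- z's component is nontrivial
    have hCcl : IsClosed (connectedComponentIn M z) := comp_isClosed hMcl z
    have hzfr : z ∈ frontier (connectedComponentIn M z) := by
      rw [hCcl.frontier_eq]
      exact ⟨mem_connectedComponentIn hzM,
        fun h => hz.2 (interior_mono (connectedComponentIn_subset M z) h)⟩
    have hacc := hsym z hzM hC z hzfr
    obtain ⟨p, hp, hpz⟩ := accPt_iff_nhds.mp hacc (Metric.ball z ε)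
      (Metric.ball_mem_nhds z hε)
    refine ⟨p, ⟨hp.2.1, ?_⟩, hpz, Metric.mem_ball.mp hp.1⟩
    intro hpin
    have h1 := comp_mem_nhds hpin
    rw [hp.2.2] at h1
    obtain ⟨δ, hδ, hball⟩ := Metric.mem_nhds_iff.mp h1
    obtain ⟨w, hw1, hw2⟩ := s1_exists_ne_close p hδ
    exact hw1 (hball (Metric.mem_ball.mpr hw2))

theorem stmt6 (M : Set S1) (hM : IsSymmetricCantorval M) :
    ∀ z ∈ M \ interior M, ∃ x : ℕ → S1,
      (∀ k, x k ∈ M \ interior M ∧ x k ≠ z) ∧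
      Filter.Tendsto x Filter.atTop (𝓝 z) := by
  intro z hz
  have hk : ∀ k : ℕ, ∃ p, p ∈ M \ interior M ∧ p ≠ z ∧ dist p z < 1 / ((k : ℝ) + 1) :=
    fun k => key_lemma M hM hz (by positivity)
  choose x hx1 hx2 hx3 using hk
  refine ⟨x, fun k => ⟨hx1 k, hx2 k⟩, ?_⟩
  rw [tendsto_iff_dist_tendsto_zero]
  exact squeeze_zero (fun k => dist_nonneg) (fun k => (hx3 k).le)
    tendsto_one_div_add_atTop_nhds_zero_nat
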